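/- Let R be a commutative ring and M a Lucas R-module. Then Ext¹_R(R/I, M) = 0 for every semi-regular ideal I of R (not necessarily finitely generated). -/

import Mathlib

open CategoryTheory

universe u

/-- An ideal is dense if its annihilator in `R` is zero. -/
def Ideal.IsDense {R : Type u} [CommRing R] (I : Ideal R) : Prop :=
  ∀ r : R, (∀ a ∈ I, a * r = 0) → r = 0

/-- An ideal is semi-regular if it contains a finitely generated dense subideal. -/
def Ideal.IsSemiRegular {R : Type u} [CommRing R] (I : Ideal R) : Prop :=
  ∃ J : Ideal R, J ≤ I ∧ J.FG ∧ J.IsDense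

/-- Membership in `𝒬`: finitely generated semi-regular ideals. -/
def Ideal.IsInQ {R : Type u} [CommRing R] (I : Ideal R) : Prop :=
  I.FG ∧ I.IsSemiRegular

/-- An `R`-module is `𝒬`-torsion if every element is annihilated by some `I ∈ 𝒬`. -/
def IsQTorsion (R : Type u) [CommRing R] (M : Type u) [AddCommGroup M] [Module R M] : Prop :=
  ∀ x : M, ∃ I : Ideal R, I.IsInQ ∧ ∀ a ∈ I, a • x = 0

/-- An `R`-module is `𝒬`-torsion-free if no nonzero element is annihilated by any `I ∈ 𝒬`. -/
def IsQTorsionFree (R : Type u) [CommRing R] (M : Type u) [AddCommGroup M] [Module R M] : Prop :=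
  ∀ x : M, (∃ I : Ideal R, I.IsInQ ∧ ∀ a ∈ I, a • x = 0) → x = 0

/-- `Ext¹_R(A, B) = 0`. -/
def Ext1Vanishes (R : Type u) [CommRing R] (A B : Type u) [AddCommGroup A] [Module R A]
    [AddCommGroup B] [Module R B] : Prop :=
  Subsingleton (((Ext R (ModuleCat.{u} R) 1).obj (Opposite.op (ModuleCat.of R A))).obj
    (ModuleCat.of R B))

/-- A Lucas module is a `𝒬`-torsion-free module `M` with `Ext¹_R(R/I, M) = 0` for all `I ∈ 𝒬`. -/
def IsLucasModule (R : Type u) [CommRing R] (M : Type u) [AddCommGroup M] [Module R M] : Prop :=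
  IsQTorsionFree R M ∧ ∀ I : Ideal R, I.IsInQ → Ext1Vanishes R (R ⧸ I) M

/-! ### Auxiliary material -/


/-- Baer-type extension condition for an ideal: every linear map `I → M` is given by
multiplication by some element of `M` (equivalently, extends to `R`). -/
def BaerFor {R : Type u} [CommRing R] (I : Ideal R) (M : Type u) [AddCommGroup M]
    [Module R M] : Prop :=
  ∀ ψ : I →ₗ[R] M, ∃ m : M, ∀ i : I, ψ i = (i : R) • m

section Core

variable {R : Type u} [CommRing R] {M : Type u} [AddCommGroup M] [Module R M]
variable {P₀ P₁ P₂ : Type u} [AddCommGroup P₀] [Module R P₀] [AddCommGroup P₁] [Module R P₁]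
  [AddCommGroup P₂] [Module R P₂]

/-- If every "cocycle" `P₁ → M` is a "coboundary", then the Baer condition holds for `I`. -/
lemma baerFor_of_lifting [Module.Projective R P₀] (I : Ideal R)
    (d₂ : P₂ →ₗ[R] P₁) (d₁ : P₁ →ₗ[R] P₀) (p : P₀ →ₗ[R] R ⧸ I)
    (hsurj : Function.Surjective p)
    (hd : p.comp d₁ = 0)
    (hdd : d₁.comp d₂ = 0)
    (hex0 : ∀ x, p x = 0 → ∃ y, d₁ y = x)
    (hcob : ∀ f : P₁ →ₗ[R] M, f.comp d₂ = 0 → ∃ g : P₀ →ₗ[R] M, g.comp d₁ = f) :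
    BaerFor I M := by
  obtain ⟨α, hα⟩ := Module.projective_lifting_property I.mkQ p (Submodule.mkQ_surjective I)
  obtain ⟨b, hb⟩ := hsurj (I.mkQ 1)
  intro ψ
  have hmk : ∀ x : P₀, I.mkQ (α x) = p x := fun x => congrArg (fun f => f x) hα
  have hmem1 : ∀ x : P₀, p x = 0 → α x ∈ I := fun x hx =>
    (Submodule.Quotient.mk_eq_zero I).mp ((hmk x).trans hx)
  have hpd : ∀ y : P₁, p (d₁ y) = 0 := fun y => congrArg (fun f => f y) hd
  set f : P₁ →ₗ[R] M :=
    ψ.comp (LinearMap.codRestrict I (α.comp d₁) (fun y => hmem1 _ (hpd y))) with hfdef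
  have hf : f.comp d₂ = 0 := by
    ext z
    have h0 : d₁ (d₂ z) = 0 := congrArg (fun h => h z) hdd
    have h1 : (LinearMap.codRestrict I (α.comp d₁) (fun y => hmem1 _ (hpd y))) (d₂ z) = 0 := by
      apply Subtype.ext
      simp [LinearMap.codRestrict, h0]
    simp [hfdef, LinearMap.comp_apply, h1]
  obtain ⟨g, hg⟩ := hcob f hf
  have hαb : α b - 1 ∈ I := by
    have h2 : I.mkQ (α b - 1) = 0 := by rw [map_sub, hmk b, hb, sub_self]
    rw [Submodule.mkQ_apply] at h2
    exact (Submodule.Quotient.mk_eq_zero I).mp h2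
  refine ⟨g b - ψ ⟨α b - 1, hαb⟩, fun i => ?_⟩
  have hib : p ((i : R) • b) = 0 := by
    rw [map_smul, hb, show ((i : R) • I.mkQ 1) = I.mkQ ((i : R) • 1) from (map_smul _ _ _).symm,
      smul_eq_mul, mul_one]
    exact (Submodule.Quotient.mk_eq_zero I).mpr i.2
  obtain ⟨y, hy⟩ := hex0 _ hib
  have h1 : f y = ψ ⟨α (d₁ y), hmem1 _ (hpd y)⟩ := rfl
  have h2 : (⟨α (d₁ y), hmem1 _ (hpd y)⟩ : I) = (i : R) • (⟨α b - 1, hαb⟩ : I) + i := by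
    apply Subtype.ext
    simp only [Submodule.coe_add, SetLike.val_smul, smul_eq_mul]
    show α (d₁ y) = (i : R) * (α b - 1) + (i : R)
    rw [hy, map_smul, smul_eq_mul]
    ring
  have h3 : g ((i : R) • b) = f y := by rw [← hy]; exact congrArg (fun h => h y) hg
  have h5 : (i : R) • g b = (i : R) • ψ ⟨α b - 1, hαb⟩ + ψ i := by
    rw [← map_smul, h3, h1, h2, map_add, map_smul]
  rw [smul_sub, h5]
  abel

/-- The Baer condition for `I` implies that every "cocycle" `P₁ → M` is a "coboundary". -/
lemma lifting_of_baerFor [Module.Projective R P₀] (I : Ideal R)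
    (d₂ : P₂ →ₗ[R] P₁) (d₁ : P₁ →ₗ[R] P₀) (p : P₀ →ₗ[R] R ⧸ I)
    (hsurj : Function.Surjective p)
    (hd : p.comp d₁ = 0)
    (hex0 : ∀ x, p x = 0 → ∃ y, d₁ y = x)
    (hex1 : ∀ y, d₁ y = 0 → ∃ z, d₂ z = y)
    (hB : BaerFor I M) :
    ∀ f : P₁ →ₗ[R] M, f.comp d₂ = 0 → ∃ g : P₀ →ₗ[R] M, g.comp d₁ = f := by
  obtain ⟨α, hα⟩ := Module.projective_lifting_property I.mkQ p (Submodule.mkQ_surjective I)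
  obtain ⟨b, hb⟩ := hsurj (I.mkQ 1)
  have hmk : ∀ x : P₀, I.mkQ (α x) = p x := fun x => congrArg (fun h => h x) hα
  have hmem1 : ∀ x : P₀, p x = 0 → α x ∈ I := fun x hx =>
    (Submodule.Quotient.mk_eq_zero I).mp ((hmk x).trans hx)
  have hpd : ∀ y : P₁, p (d₁ y) = 0 := fun y => congrArg (fun h => h y) hd
  have hib : ∀ r : R, r ∈ I → p (r • b) = 0 := by
    intro r hr
    rw [map_smul, hb, show (r • I.mkQ 1) = I.mkQ (r • 1) from (map_smul _ _ _).symm,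
      smul_eq_mul, mul_one]
    exact (Submodule.Quotient.mk_eq_zero I).mpr hr
  intro f hf
  have hker : LinearMap.ker d₁ ≤ LinearMap.ker f := by
    intro y hy
    obtain ⟨z, hz⟩ := hex1 y (LinearMap.mem_ker.mp hy)
    have h0 : f (d₂ z) = 0 := congrArg (fun h => h z) hf
    rw [hz] at h0
    exact LinearMap.mem_ker.mpr h0
  have hKR : LinearMap.ker p ≤ LinearMap.range d₁ := by
    intro x hx
    exact hex0 x (LinearMap.mem_ker.mp hx)
  -- the factorization f' : ker p → M of f through d₁
  set e1 : (LinearMap.ker p : Submodule R P₀) →ₗ[R] (LinearMap.range d₁ : Submodule R P₀) :=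
    Submodule.inclusion hKR with he1
  set fbar : (P₁ ⧸ LinearMap.ker d₁) →ₗ[R] M := Submodule.liftQ _ f hker with hfbar
  set f' : (LinearMap.ker p : Submodule R P₀) →ₗ[R] M :=
    fbar ∘ₗ ((LinearMap.quotKerEquivRange d₁).symm : _ →ₗ[R] _) ∘ₗ e1 with hf'def
  have hf' : ∀ (y : P₁) (h : d₁ y ∈ LinearMap.ker p), f' ⟨d₁ y, h⟩ = f y := by
    intro y h
    have h1 : e1 ⟨d₁ y, h⟩ = ⟨d₁ y, LinearMap.mem_range_self _ y⟩ := rfl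
    have h2 : (LinearMap.quotKerEquivRange d₁).symm ⟨d₁ y, LinearMap.mem_range_self _ y⟩
        = Submodule.Quotient.mk y := LinearMap.quotKerEquivRange_symm_apply_image d₁ y _
    simp only [hf'def, LinearMap.comp_apply, h1]
    erw [h2]
    exact Submodule.liftQ_apply _ f _
  -- Baer condition applied to i ↦ f' (i • b)
  set βK : (I : Submodule R R) →ₗ[R] (LinearMap.ker p : Submodule R P₀) :=
    LinearMap.codRestrict _ ((LinearMap.toSpanSingleton R P₀ b).comp (I : Submodule R R).subtype)
      (fun i => LinearMap.mem_ker.mpr (hib (i : R) i.2)) with hβK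
  obtain ⟨m, hm⟩ := hB (f'.comp βK)
  have hm' : ∀ i : (I : Submodule R R), f' (βK i) = (i : R) • m := fun i => hm i
  -- the extension g : P₀ → M
  have hτmem : ∀ x : P₀, x - (α x) • b ∈ LinearMap.ker p := by
    intro x
    rw [LinearMap.mem_ker, map_sub, map_smul, hb,
      show ((α x) • I.mkQ 1) = I.mkQ ((α x) • 1) from (map_smul _ _ _).symm, smul_eq_mul, mul_one,
      hmk x, sub_self]
  set τ : P₀ →ₗ[R] (LinearMap.ker p : Submodule R P₀) :=
    LinearMap.codRestrict _ (LinearMap.id - (LinearMap.toSpanSingleton R P₀ b).comp α)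
      (fun x => hτmem x) with hτ
  refine ⟨f'.comp τ + α.smulRight m, ?_⟩
  ext y
  have hi : α (d₁ y) ∈ I := hmem1 _ (hpd y)
  have step1 : τ (d₁ y) = ⟨d₁ y, LinearMap.mem_ker.mpr (hpd y)⟩ - βK ⟨α (d₁ y), hi⟩ := by
    apply Subtype.ext
    simp [hτ, hβK, LinearMap.codRestrict, LinearMap.toSpanSingleton, LinearMap.smulRight]
  have step2 : f' (τ (d₁ y)) = f y - (α (d₁ y)) • m := by
    rw [step1, map_sub, hf' y, hm' ⟨α (d₁ y), hi⟩]
  simp only [LinearMap.add_apply, LinearMap.comp_apply, LinearMap.smulRight_apply, step2]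
  abel

end Core

/-- The torsion-free property bootstraps the Baer condition from a finitely generated
dense subideal to the whole semi-regular ideal. -/
lemma baerFor_of_subideal {R : Type u} [CommRing R] {M : Type u} [AddCommGroup M] [Module R M]
    (hTF : IsQTorsionFree R M) {I J : Ideal R} (hJI : J ≤ I) (hJQ : J.IsInQ)
    (hJ : BaerFor J M) : BaerFor I M := by
  intro ψ
  obtain ⟨m, hm⟩ := hJ (ψ.comp (Submodule.inclusion hJI))
  refine ⟨m, fun i => ?_⟩
  have key : ∀ a ∈ J, a • (ψ i - (i : R) • m) = 0 := by
    intro a ha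
    have hmem : a * (i : R) ∈ J := J.mul_mem_right _ ha
    have h1 : Submodule.inclusion hJI (⟨a * (i : R), hmem⟩ : J) = a • i :=
      Subtype.ext (by simp [smul_eq_mul])
    have h2 : ψ (a • i) = (a * (i : R)) • m := by
      have := hm ⟨a * (i : R), hmem⟩
      rw [LinearMap.comp_apply, h1] at this
      exact this
    rw [smul_sub, ← map_smul, h2, smul_smul]
    exact sub_self _
  have := hTF (ψ i - (i : R) • m) ⟨J, hJQ, key⟩
  exact sub_eq_zero.mp this

section Plumbing

open CategoryTheory Limits

lemma ext1Vanishes_iff_baerFor (R : Type u) [CommRing R] (M : Type u) [AddCommGroup M]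
    [Module R M] (I : Ideal R) : Ext1Vanishes R (R ⧸ I) M ↔ BaerFor I M := by
  obtain ⟨P⟩ := (inferInstance :
    HasProjectiveResolution (ModuleCat.of R (R ⧸ I))).out
  have hiff : Ext1Vanishes R (R ⧸ I) M ↔
      ((P.complex.linearYonedaObj R (ModuleCat.of R M)).sc' 0 1 2).Exact := by
    rw [Ext1Vanishes]
    constructor
    · intro h
      rw [← HomologicalComplex.exactAt_iff' _ 0 1 2 (CochainComplex.prev_nat_succ 0)
        ((ComplexShape.up ℕ).next_eq' rfl),
        HomologicalComplex.exactAt_iff_isZero_homology]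
      haveI := h
      exact (ModuleCat.isZero_of_subsingleton _).of_iso
        (P.isoExt (R := R) 1 (ModuleCat.of R M)).symm
    · intro h
      refine ModuleCat.subsingleton_of_isZero ?_
      have hz := (HomologicalComplex.exactAt_iff_isZero_homology _ 1).mp
        ((HomologicalComplex.exactAt_iff' _ 0 1 2 (CochainComplex.prev_nat_succ 0)
          ((ComplexShape.up ℕ).next_eq' rfl)).mpr h)
      exact hz.of_iso (P.isoExt (R := R) 1 (ModuleCat.of R M))
  haveI hproj : Module.Projective R (P.complex.X 0) := by
    rw [IsProjective.iff_projective.{u, u}]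
    exact (inferInstance : Projective (P.complex.X 0))
  have hsurj : Function.Surjective
      ((P.π.f 0).hom : P.complex.X 0 →ₗ[R] R ⧸ I) :=
    (ModuleCat.epi_iff_surjective (P.π.f 0)).mp inferInstance
  have hd : ((P.π.f 0).hom : P.complex.X 0 →ₗ[R] R ⧸ I).comp (P.complex.d 1 0).hom = 0 :=
    congrArg ModuleCat.Hom.hom P.complex_d_comp_π_f_zero
  have hdd : ((P.complex.d 1 0).hom : P.complex.X 1 →ₗ[R] P.complex.X 0).comp
      (P.complex.d 2 1).hom = 0 :=
    congrArg ModuleCat.Hom.hom (P.complex.d_comp_d 2 1 0)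
  have hex0 : ∀ x : P.complex.X 0,
      ((P.π.f 0).hom : P.complex.X 0 →ₗ[R] R ⧸ I) x = 0 → ∃ y, (P.complex.d 1 0).hom y = x :=
    (ShortComplex.moduleCat_exact_iff _).mp P.exact₀
  have hex1 : ∀ y : P.complex.X 1,
      (P.complex.d 1 0).hom y = 0 → ∃ z, (P.complex.d 2 1).hom z = y :=
    (ShortComplex.moduleCat_exact_iff _).mp
      ((HomologicalComplex.exactAt_iff' P.complex 2 1 0 ((ComplexShape.down ℕ).prev_eq' rfl)
        (ChainComplex.next_nat_succ 0)).mp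
        (P.complex_exactAt_succ 0))
  rw [hiff, ShortComplex.moduleCat_exact_iff]
  constructor
  · intro h
    exact baerFor_of_lifting I (P.complex.d 2 1).hom (P.complex.d 1 0).hom
      (P.π.f 0).hom hsurj hd hdd hex0 (fun f hf => by
        obtain ⟨g, hg⟩ := h (ModuleCat.ofHom f) (ModuleCat.hom_ext hf)
        exact ⟨g.hom, congrArg ModuleCat.Hom.hom hg⟩)
  · intro hB
    intro x₂ hx₂
    obtain ⟨g, hg⟩ := lifting_of_baerFor I (P.complex.d 2 1).hom (P.complex.d 1 0).hom
      (P.π.f 0).hom hsurj hd hex0 hex1 hB x₂.hom (congrArg ModuleCat.Hom.hom hx₂)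
    exact ⟨ModuleCat.ofHom g, ModuleCat.hom_ext hg⟩

end Plumbing

/-- If `M` is a Lucas module, then `Ext¹_R(R/I, M) = 0` for every semi-regular
ideal `I` of `R` (not necessarily finitely generated). -/
theorem ext_vanishes_of_semiRegular (R : Type u) [CommRing R]
    (M : Type u) [AddCommGroup M] [Module R M] (hM : IsLucasModule R M)
    (I : Ideal R) (hI : I.IsSemiRegular) :
    Ext1Vanishes R (R ⧸ I) M := by
  obtain ⟨J, hJI, hfg, hdense⟩ := hI
  have hJQ : J.IsInQ := ⟨hfg, ⟨J, le_rfl, hfg, hdense⟩⟩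
  have hJ : BaerFor J M := (ext1Vanishes_iff_baerFor R M J).mp (hM.2 J hJQ)
  exact (ext1Vanishes_iff_baerFor R M I).mpr (baerFor_of_subideal hM.1 hJI hJQ hJ)
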